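/- There exist two finite symmetric generating sets S₁, S₂ of Γ = H_3(ℤ) × ℤ such that the corresponding word metrics ρ₁, ρ₂ satisfy ρ₁(id,γ)/ρ₂(id,γ) → 1 as γ → ∞, but sup_γ |ρ₁(id,γ) − ρ₂(id,γ)| = ∞; in fact |ρ₁(id,γ_n) − ρ₂(id,γ_n)| ≥ c√n along γ_n = (n;0,0,n). -/

import Mathlib

open Filter

/-- The group `Γ = ℤ × H₃(ℤ)`, with elements written `(v; x, y, z)` in Malcev
coordinates for the integral Heisenberg group: the group law is
`(v;x,y,z)·(v';x',y',z') = (v+v'; x+x', y+y', z+z'+xy')`. -/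
abbrev Γ4 : Type := ℤ × ℤ × ℤ × ℤ

/-- Multiplication in `ℤ × H₃(ℤ)`. -/
def gmul (a b : Γ4) : Γ4 :=
  (a.1 + b.1, a.2.1 + b.2.1, a.2.2.1 + b.2.2.1,
    a.2.2.2 + b.2.2.2 + a.2.1 * b.2.2.1)

/-- Inversion in `ℤ × H₃(ℤ)`. -/
def ginv (a : Γ4) : Γ4 :=
  (-a.1, -a.2.1, -a.2.2.1, -a.2.2.2 + a.2.1 * a.2.2.1)

/-- The identity of `ℤ × H₃(ℤ)`. -/
def gone : Γ4 := (0, 0, 0, 0)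

/-- The word length `ρ_S(id, γ)` of `γ` with respect to a generating set `S`:
the least `n` such that `γ` is a product of `n` elements of `S`. -/
noncomputable def wordLen (S : Set Γ4) (γ : Γ4) : ℕ :=
  sInf {n : ℕ | ∃ l : List Γ4, l.length = n ∧ (∀ a ∈ l, a ∈ S) ∧
    l.foldl gmul gone = γ}

/-- The generating set `S₁ = {(1;0,0,1)^{±1}, (1;0,0,-1)^{±1}, (0;1,0,0)^{±1}, (0;0,1,0)^{±1}}`. -/
def S1 : Set Γ4 :=
  {(1,0,0,1), (-1,0,0,-1), (1,0,0,-1), (-1,0,0,1),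
   (0,1,0,0), (0,-1,0,0), (0,0,1,0), (0,0,-1,0)}

/-- The generating set `S₂ = {(1;0,0,0)^{±1}, (0;1,0,0)^{±1}, (0;0,1,0)^{±1}}`. -/
def S2 : Set Γ4 :=
  {(1,0,0,0), (-1,0,0,0), (0,1,0,0), (0,-1,0,0), (0,0,1,0), (0,0,-1,0)}

lemma gmul_assoc (a b c : Γ4) : gmul (gmul a b) c = gmul a (gmul b c) := by
  simp only [gmul, Prod.mk.injEq]; refine ⟨by ring, by ring, by ring, by ring⟩
lemma gone_gmul (a : Γ4) : gmul gone a = a := by simp [gmul, gone]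
lemma gmul_gone (a : Γ4) : gmul a gone = a := by simp [gmul, gone]

def ev (l : List Γ4) : Γ4 := l.foldl gmul gone

lemma foldl_gmul (l : List Γ4) : ∀ s : Γ4, l.foldl gmul s = gmul s (ev l) := by
  induction l with
  | nil => intro s; simp [ev, gmul_gone]
  | cons h t ih =>
    intro s
    simp only [ev, List.foldl_cons, gone_gmul] at *
    rw [ih (gmul s h), ih h, gmul_assoc]

lemma ev_nil : ev [] = gone := rfl
lemma ev_cons (a : Γ4) (l : List Γ4) : ev (a :: l) = gmul a (ev l) := by
  simp only [ev, List.foldl_cons, gone_gmul]; exact foldl_gmul l a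
lemma ev_append (l₁ l₂ : List Γ4) : ev (l₁ ++ l₂) = gmul (ev l₁) (ev l₂) := by
  simp only [ev, List.foldl_append]; exact foldl_gmul l₂ _

def addz (m : ℤ) (a : Γ4) : Γ4 := (a.1, a.2.1, a.2.2.1, a.2.2.2 + m)

lemma gmul_addz_left (m : ℤ) (a b : Γ4) : gmul (addz m a) b = addz m (gmul a b) := by
  simp only [gmul, addz, Prod.mk.injEq]; refine ⟨trivial, trivial, trivial, by ring⟩
lemma gmul_addz_right (m : ℤ) (a b : Γ4) : gmul a (addz m b) = addz m (gmul a b) := by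
  simp only [gmul, addz, Prod.mk.injEq]; refine ⟨trivial, trivial, trivial, by ring⟩
lemma addz_addz (m n : ℤ) (a : Γ4) : addz m (addz n a) = addz (m + n) a := by
  simp only [addz, Prod.mk.injEq]; refine ⟨trivial, trivial, trivial, by ring⟩
lemma addz_zero (a : Γ4) : addz 0 a = a := by simp [addz]

lemma ev_map_addz (δ : Γ4 → ℤ) (l : List Γ4) :
    ev (l.map fun a => addz (δ a) a) = addz ((l.map δ).sum) (ev l) := by
  induction l with
  | nil => simp [ev_nil, addz_zero]
  | cons h t ih =>
    simp only [List.map_cons, ev_cons, List.sum_cons, ih, gmul_addz_left,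
      gmul_addz_right, addz_addz]
    ring_nf

-- replicate lemmas
lemma ev_replicate_y0 (a b d : ℤ) (n : ℕ) :
    ev (List.replicate n (a, b, 0, d)) = (n * a, n * b, 0, n * d) := by
  induction n with
  | zero => simp [ev_nil, gone]
  | succ k ih =>
    rw [List.replicate_succ, ev_cons, ih]
    simp only [gmul, Prod.mk.injEq]
    push_cast; refine ⟨by ring, by ring, trivial, by ring⟩

lemma ev_replicate_y (c : ℤ) (n : ℕ) :
    ev (List.replicate n (0, 0, c, 0)) = (0, 0, n * c, 0) := by
  induction n with
  | zero => simp [ev_nil, gone]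
  | succ k ih =>
    rw [List.replicate_succ, ev_cons, ih]
    simp only [gmul, Prod.mk.injEq]
    push_cast; refine ⟨trivial, trivial, by ring, by ring⟩

def wX (m : ℤ) : List Γ4 := List.replicate m.natAbs (if 0 ≤ m then (0,1,0,0) else (0,-1,0,0))
def wY (m : ℤ) : List Γ4 := List.replicate m.natAbs (if 0 ≤ m then (0,0,1,0) else (0,0,-1,0))
def wV (m : ℤ) : List Γ4 := List.replicate m.natAbs (if 0 ≤ m then (1,0,0,0) else (-1,0,0,0))

lemma ev_wX (m : ℤ) : ev (wX m) = (0, m, 0, 0) := by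
  unfold wX
  by_cases h : 0 ≤ m
  · simp only [h, if_pos, ev_replicate_y0]
    have : (m.natAbs : ℤ) = m := Int.natAbs_of_nonneg h
    simp [this]
  · simp only [h, if_neg, not_false_iff, ev_replicate_y0]
    have : (m.natAbs : ℤ) = -m := Int.ofNat_natAbs_of_nonpos (le_of_lt (not_le.mp h))
    simp [this]

lemma ev_wY (m : ℤ) : ev (wY m) = (0, 0, m, 0) := by
  unfold wY
  by_cases h : 0 ≤ m
  · simp only [h, if_pos, ev_replicate_y]
    have : (m.natAbs : ℤ) = m := Int.natAbs_of_nonneg h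
    simp [this]
  · simp only [h, if_neg, not_false_iff, ev_replicate_y]
    have : (m.natAbs : ℤ) = -m := Int.ofNat_natAbs_of_nonpos (le_of_lt (not_le.mp h))
    simp [this]

lemma ev_wV (m : ℤ) : ev (wV m) = (m, 0, 0, 0) := by
  unfold wV
  by_cases h : 0 ≤ m
  · simp only [h, if_pos, ev_replicate_y0]
    have : (m.natAbs : ℤ) = m := Int.natAbs_of_nonneg h
    simp [this]
  · simp only [h, if_neg, not_false_iff, ev_replicate_y0]
    have : (m.natAbs : ℤ) = -m := Int.ofNat_natAbs_of_nonpos (le_of_lt (not_le.mp h))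
    simp [this]

lemma len_wX (m : ℤ) : (wX m).length = m.natAbs := by simp [wX]
lemma len_wY (m : ℤ) : (wY m).length = m.natAbs := by simp [wY]
lemma len_wV (m : ℤ) : (wV m).length = m.natAbs := by simp [wV]

def comW (a b : ℤ) : List Γ4 := wX a ++ wY b ++ wX (-a) ++ wY (-b)

lemma ev_comW (a b : ℤ) : ev (comW a b) = (0, 0, 0, a * b) := by
  simp only [comW, ev_append, ev_wX, ev_wY, gmul, Prod.mk.injEq]
  refine ⟨by ring, by ring, by ring, by ring⟩

lemma len_comW (a b : ℤ) : (comW a b).length = 2 * (a.natAbs + b.natAbs) := by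
  simp only [comW, List.length_append, len_wX, len_wY, Int.natAbs_neg]; ring

lemma mem_wXY (m : ℤ) (g : Γ4) (h : g ∈ wX m ∨ g ∈ wY m) :
    g = (0,1,0,0) ∨ g = (0,-1,0,0) ∨ g = (0,0,1,0) ∨ g = (0,0,-1,0) := by
  rcases h with h | h
  · have := List.eq_of_mem_replicate h
    by_cases hm : 0 ≤ m <;> simp [hm] at this <;> tauto
  · have := List.eq_of_mem_replicate h
    by_cases hm : 0 ≤ m <;> simp [hm] at this <;> tauto

lemma mem_comW (a b : ℤ) (g : Γ4) (h : g ∈ comW a b) :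
    g = (0,1,0,0) ∨ g = (0,-1,0,0) ∨ g = (0,0,1,0) ∨ g = (0,0,-1,0) := by
  simp only [comW, List.mem_append] at h
  rcases h with ((h|h)|h)|h
  · exact mem_wXY a g (Or.inl h)
  · exact mem_wXY b g (Or.inr h)
  · exact mem_wXY (-a) g (Or.inl h)
  · exact mem_wXY (-b) g (Or.inr h)

noncomputable section
def cword (c : ℤ) : List Γ4 :=
  comW (c.sign * (Nat.sqrt c.natAbs : ℤ)) ((c.natAbs / Nat.sqrt c.natAbs : ℕ) : ℤ) ++
  comW c.sign ((c.natAbs % Nat.sqrt c.natAbs : ℕ) : ℤ)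

lemma ev_cword (c : ℤ) : ev (cword c) = (0, 0, 0, c) := by
  simp only [cword, ev_append, ev_comW, gmul, Prod.mk.injEq]
  refine ⟨by ring, by ring, by ring, ?_⟩
  have h : ((Nat.sqrt c.natAbs : ℤ)) * ((c.natAbs / Nat.sqrt c.natAbs : ℕ) : ℤ)
      + ((c.natAbs % Nat.sqrt c.natAbs : ℕ) : ℤ) = (c.natAbs : ℤ) := by
    exact_mod_cast congrArg (fun k : ℕ => (k : ℤ)) (Nat.div_add_mod c.natAbs (Nat.sqrt c.natAbs))
  have hs : c.sign * (c.natAbs : ℤ) = c := Int.sign_mul_natAbs c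
  linear_combination c.sign * h + hs

lemma len_cword (c : ℤ) : (cword c).length ≤ 6 * Nat.sqrt c.natAbs + 4 := by
  simp only [cword, List.length_append, len_comW, Int.natAbs_mul, Int.natAbs_natCast]
  set n := c.natAbs with hn
  set t := Nat.sqrt n with ht
  have hlt : n < (t + 1) * (t + 1) := by
    have := Nat.lt_succ_sqrt n
    simpa [← ht, Nat.succ_eq_add_one] using this
  have hsign : c.sign.natAbs ≤ 1 := by
    by_cases hc : c = 0
    · simp [hc]
    · simp [Int.natAbs_sign_of_ne_zero hc]
  rcases Nat.eq_zero_or_pos t with h0 | hpos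
  · have hn0 : n = 0 := by rw [h0] at hlt; omega
    have hc0 : c = 0 := Int.natAbs_eq_zero.mp hn0
    simp [hn0, h0, hc0]
  · have hq : n / t ≤ t + 2 := by
      rw [Nat.div_le_iff_le_mul_add_pred hpos]
      nlinarith
    have hr : n % t < t := Nat.mod_lt n hpos
    nlinarith


lemma wordLen_le (S : Set Γ4) (γ : Γ4) (l : List Γ4) (h1 : ∀ a ∈ l, a ∈ S)
    (h2 : ev l = γ) : wordLen S γ ≤ l.length :=
  Nat.sInf_le ⟨l, rfl, h1, h2⟩

lemma wordLen_witness (S : Set Γ4) (γ : Γ4)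
    (hne : ∃ l : List Γ4, (∀ a ∈ l, a ∈ S) ∧ ev l = γ) :
    ∃ l : List Γ4, (∀ a ∈ l, a ∈ S) ∧ ev l = γ ∧ l.length = wordLen S γ := by
  obtain ⟨l0, h1, h2⟩ := hne
  have hne' : {n : ℕ | ∃ l : List Γ4, l.length = n ∧ (∀ a ∈ l, a ∈ S) ∧
      l.foldl gmul gone = γ}.Nonempty := ⟨l0.length, l0, rfl, h1, h2⟩
  obtain ⟨l, hl, hS, hev⟩ := Nat.sInf_mem hne'
  exact ⟨l, hS, hev, hl⟩

lemma xy_mem_S1 (g : Γ4)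
    (h : g = (0,1,0,0) ∨ g = (0,-1,0,0) ∨ g = (0,0,1,0) ∨ g = (0,0,-1,0)) : g ∈ S1 := by
  rcases h with rfl|rfl|rfl|rfl <;> simp [S1]
lemma xy_mem_S2 (g : Γ4)
    (h : g = (0,1,0,0) ∨ g = (0,-1,0,0) ∨ g = (0,0,1,0) ∨ g = (0,0,-1,0)) : g ∈ S2 := by
  rcases h with rfl|rfl|rfl|rfl <;> simp [S2]

def word2 (γ : Γ4) : List Γ4 :=
  wV γ.1 ++ wX γ.2.1 ++ wY γ.2.2.1 ++ cword (γ.2.2.2 - γ.2.1 * γ.2.2.1)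

lemma ev_word2 (γ : Γ4) : ev (word2 γ) = γ := by
  obtain ⟨v, x, y, z⟩ := γ
  simp only [word2, ev_append, ev_wV, ev_wX, ev_wY, ev_cword, gmul, Prod.mk.injEq]
  norm_num

lemma mem_word2 (γ : Γ4) : ∀ a ∈ word2 γ, a ∈ S2 := by
  intro a ha
  simp only [word2, List.mem_append] at ha
  rcases ha with ((ha|ha)|ha)|ha
  · have := List.eq_of_mem_replicate ha
    by_cases hm : 0 ≤ γ.1 <;> simp [hm] at this <;> simp [this, S2]
  · exact xy_mem_S2 a (mem_wXY _ a (Or.inl ha))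
  · exact xy_mem_S2 a (mem_wXY _ a (Or.inr ha))
  · simp only [cword, List.mem_append] at ha
    rcases ha with ha|ha <;> exact xy_mem_S2 a (mem_comW _ _ a ha)

lemma gmul_central (a : Γ4) (e : ℤ) : gmul a (0,0,0,e) = addz e a := by
  simp only [gmul, addz, Prod.mk.injEq]; refine ⟨by ring, by ring, by ring, by ring⟩

lemma natAbs_sum_le (l : List Γ4) (δ : Γ4 → ℤ) (h : ∀ a ∈ l, (δ a).natAbs ≤ 1) :
    ((l.map δ).sum).natAbs ≤ l.length := by
  induction l with
  | nil => simp
  | cons hd t ih =>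
    simp only [List.map_cons, List.sum_cons, List.length_cons]
    calc (δ hd + (t.map δ).sum).natAbs ≤ (δ hd).natAbs + ((t.map δ).sum).natAbs :=
          Int.natAbs_add_le _ _
    _ ≤ 1 + t.length := by
        have := h hd (List.mem_cons_self (a := hd) (l := t))
        have := ih (fun a ha => h a (List.mem_cons_of_mem hd ha))
        omega
    _ = t.length + 1 := by omega

lemma surgery (S T : Set Γ4) (δ : Γ4 → ℤ)
    (hmap : ∀ a ∈ S, addz (δ a) a ∈ T) (hδ : ∀ a ∈ S, (δ a).natAbs ≤ 1)
    (hXY : ∀ g : Γ4, (g = (0,1,0,0) ∨ g = (0,-1,0,0) ∨ g = (0,0,1,0) ∨ g = (0,0,-1,0)) → g ∈ T)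
    (γ : Γ4) (l : List Γ4) (h1 : ∀ a ∈ l, a ∈ S) (h2 : ev l = γ) :
    ∃ l' : List Γ4, (∀ a ∈ l', a ∈ T) ∧ ev l' = γ ∧
      l'.length ≤ l.length + 6 * Nat.sqrt l.length + 4 := by
  set m := (l.map δ).sum with hm
  refine ⟨(l.map fun a => addz (δ a) a) ++ cword (-m), ?_, ?_, ?_⟩
  · intro a ha
    simp only [List.mem_append, List.mem_map] at ha
    rcases ha with ⟨b, hb, rfl⟩ | ha
    · exact hmap b (h1 b hb)
    · simp only [cword, List.mem_append] at ha
      rcases ha with ha|ha <;> exact hXY a (mem_comW _ _ a ha)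
  · rw [ev_append, ev_map_addz, ev_cword, h2, gmul_central, addz_addz]
    simp [addz_zero, hm]
  · rw [List.length_append, List.length_map]
    have h3 : (-m).natAbs ≤ l.length := by
      rw [Int.natAbs_neg]; exact natAbs_sum_le l δ (fun a ha => hδ a (h1 a ha))
    have := len_cword (-m)
    have := Nat.sqrt_le_sqrt h3
    omega

lemma s2_word (γ : Γ4) : ∃ l : List Γ4, (∀ a ∈ l, a ∈ S2) ∧ ev l = γ :=
  ⟨word2 γ, mem_word2 γ, ev_word2 γ⟩

lemma wl_compare_12 (γ : Γ4) :
    wordLen S1 γ ≤ wordLen S2 γ + 6 * Nat.sqrt (wordLen S2 γ) + 4 := by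
  obtain ⟨l, hS, hev, hlen⟩ := wordLen_witness S2 γ (s2_word γ)
  obtain ⟨l', hT, hev', hlen'⟩ := surgery S2 S1 (fun a => if a.1 = 0 then 0 else 1)
    (by intro a ha
        simp only [S2, Set.mem_insert_iff, Set.mem_singleton_iff] at ha
        rcases ha with rfl|rfl|rfl|rfl|rfl|rfl <;> simp [addz, S1] <;> norm_num)
    (by intro a ha; by_cases h : a.1 = 0 <;> simp [h])
    (fun g hg => xy_mem_S1 g hg) γ l hS hev
  calc wordLen S1 γ ≤ l'.length := wordLen_le S1 γ l' hT hev'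
  _ ≤ l.length + 6 * Nat.sqrt l.length + 4 := hlen'
  _ = wordLen S2 γ + 6 * Nat.sqrt (wordLen S2 γ) + 4 := by rw [hlen]

lemma s1_word (γ : Γ4) : ∃ l : List Γ4, (∀ a ∈ l, a ∈ S1) ∧ ev l = γ := by
  obtain ⟨l, hS, hev⟩ := s2_word γ
  obtain ⟨l', hT, hev', _⟩ := surgery S2 S1 (fun a => if a.1 = 0 then 0 else 1)
    (by intro a ha
        simp only [S2, Set.mem_insert_iff, Set.mem_singleton_iff] at ha
        rcases ha with rfl|rfl|rfl|rfl|rfl|rfl <;> simp [addz, S1] <;> norm_num)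
    (by intro a ha; by_cases h : a.1 = 0 <;> simp [h])
    (fun g hg => xy_mem_S1 g hg) γ l hS hev
  exact ⟨l', hT, hev'⟩

lemma wl_compare_21 (γ : Γ4) :
    wordLen S2 γ ≤ wordLen S1 γ + 6 * Nat.sqrt (wordLen S1 γ) + 4 := by
  obtain ⟨l, hS, hev, hlen⟩ := wordLen_witness S1 γ (s1_word γ)
  obtain ⟨l', hT, hev', hlen'⟩ := surgery S1 S2 (fun a => if a.1 = 0 then 0 else -a.2.2.2)
    (by intro a ha
        simp only [S1, Set.mem_insert_iff, Set.mem_singleton_iff] at ha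
        rcases ha with rfl|rfl|rfl|rfl|rfl|rfl|rfl|rfl <;> simp [addz, S2] <;> norm_num)
    (by intro a ha
        simp only [S1, Set.mem_insert_iff, Set.mem_singleton_iff] at ha
        rcases ha with rfl|rfl|rfl|rfl|rfl|rfl|rfl|rfl <;> norm_num)
    (fun g hg => xy_mem_S2 g hg) γ l hS hev
  calc wordLen S2 γ ≤ l'.length := wordLen_le S2 γ l' hT hev'
  _ ≤ l.length + 6 * Nat.sqrt l.length + 4 := hlen'
  _ = wordLen S1 γ + 6 * Nat.sqrt (wordLen S1 γ) + 4 := by rw [hlen]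

def cv (l : List Γ4) : ℕ := l.countP (fun a => decide (a.1 ≠ 0))
def cx (l : List Γ4) : ℕ := l.countP (fun a => decide (a.2.1 ≠ 0))
def cy (l : List Γ4) : ℕ := l.countP (fun a => decide (a.2.2.1 ≠ 0))

lemma s2_len (l : List Γ4) (h : ∀ a ∈ l, a ∈ S2) : l.length = cv l + cx l + cy l := by
  induction l with
  | nil => simp [cv, cx, cy]
  | cons hd t ih =>
    have hh := h hd (List.mem_cons_self (a := hd) (l := t))
    have ih' := ih (fun a ha => h a (List.mem_cons_of_mem hd ha))
    simp only [S2, Set.mem_insert_iff, Set.mem_singleton_iff] at hh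
    rcases hh with rfl|rfl|rfl|rfl|rfl|rfl <;>
      simp [cv, cx, cy, List.countP_cons] at * <;> omega

lemma s2_bounds (l : List Γ4) (h : ∀ a ∈ l, a ∈ S2) : ∀ s : Γ4,
    ((l.foldl gmul s).1 - s.1).natAbs ≤ cv l ∧
    ((l.foldl gmul s).2.1 - s.2.1).natAbs ≤ cx l ∧
    ((l.foldl gmul s).2.2.1 - s.2.2.1).natAbs ≤ cy l ∧
    ((l.foldl gmul s).2.2.2 - s.2.2.2).natAbs ≤ cy l * (s.2.1.natAbs + cx l) := by
  induction l with
  | nil => intro s; simp [cv, cx, cy]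
  | cons hd t ih =>
    intro s
    have hh := h hd (List.mem_cons_self (a := hd) (l := t))
    have ih' := ih (fun a ha => h a (List.mem_cons_of_mem hd ha))
    simp only [S2, Set.mem_insert_iff, Set.mem_singleton_iff] at hh
    simp only [List.foldl_cons]
    rcases hh with rfl|rfl|rfl|rfl|rfl|rfl
    · -- (1,0,0,0)
      have key : gmul s (1,0,0,0) = (s.1 + 1, s.2.1, s.2.2.1, s.2.2.2) := by simp [gmul]
      rw [key]
      obtain ⟨i1, i2, i3, i4⟩ := ih' (s.1 + 1, s.2.1, s.2.2.1, s.2.2.2)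
      dsimp only at i1 i2 i3 i4
      have hcv : cv ((1,0,0,0) :: t) = cv t + 1 := by simp [cv, List.countP_cons]
      have hcx : cx ((1,0,0,0) :: t) = cx t := by simp [cx, List.countP_cons]
      have hcy : cy ((1,0,0,0) :: t) = cy t := by simp [cy, List.countP_cons]
      rw [hcv, hcx, hcy]
      exact ⟨by omega, i2, i3, i4⟩
    · have key : gmul s (-1,0,0,0) = (s.1 - 1, s.2.1, s.2.2.1, s.2.2.2) := by
        simp [gmul]; ring
      rw [key]
      obtain ⟨i1, i2, i3, i4⟩ := ih' (s.1 - 1, s.2.1, s.2.2.1, s.2.2.2)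
      dsimp only at i1 i2 i3 i4
      have hcv : cv ((-1,0,0,0) :: t) = cv t + 1 := by simp [cv, List.countP_cons]
      have hcx : cx ((-1,0,0,0) :: t) = cx t := by simp [cx, List.countP_cons]
      have hcy : cy ((-1,0,0,0) :: t) = cy t := by simp [cy, List.countP_cons]
      rw [hcv, hcx, hcy]
      exact ⟨by omega, i2, i3, i4⟩
    · -- (0,1,0,0) : x-letter
      have key : gmul s (0,1,0,0) = (s.1, s.2.1 + 1, s.2.2.1, s.2.2.2) := by simp [gmul]
      rw [key]
      obtain ⟨i1, i2, i3, i4⟩ := ih' (s.1, s.2.1 + 1, s.2.2.1, s.2.2.2)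
      dsimp only at i1 i2 i3 i4
      have hcv : cv ((0,1,0,0) :: t) = cv t := by simp [cv, List.countP_cons]
      have hcx : cx ((0,1,0,0) :: t) = cx t + 1 := by simp [cx, List.countP_cons]
      have hcy : cy ((0,1,0,0) :: t) = cy t := by simp [cy, List.countP_cons]
      rw [hcv, hcx, hcy]
      refine ⟨i1, by omega, i3, ?_⟩
      have h2 : cy t * ((s.2.1 + 1).natAbs + cx t) ≤ cy t * (s.2.1.natAbs + (cx t + 1)) :=
        Nat.mul_le_mul_left _ (by omega)
      omega
    · have key : gmul s (0,-1,0,0) = (s.1, s.2.1 - 1, s.2.2.1, s.2.2.2) := by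
        simp [gmul]; ring
      rw [key]
      obtain ⟨i1, i2, i3, i4⟩ := ih' (s.1, s.2.1 - 1, s.2.2.1, s.2.2.2)
      dsimp only at i1 i2 i3 i4
      have hcv : cv ((0,-1,0,0) :: t) = cv t := by simp [cv, List.countP_cons]
      have hcx : cx ((0,-1,0,0) :: t) = cx t + 1 := by simp [cx, List.countP_cons]
      have hcy : cy ((0,-1,0,0) :: t) = cy t := by simp [cy, List.countP_cons]
      rw [hcv, hcx, hcy]
      refine ⟨i1, by omega, i3, ?_⟩
      have h2 : cy t * ((s.2.1 - 1).natAbs + cx t) ≤ cy t * (s.2.1.natAbs + (cx t + 1)) :=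
        Nat.mul_le_mul_left _ (by omega)
      omega
    · -- (0,0,1,0) : y-letter
      have key : gmul s (0,0,1,0) = (s.1, s.2.1, s.2.2.1 + 1, s.2.2.2 + s.2.1) := by simp [gmul]
      rw [key]
      obtain ⟨i1, i2, i3, i4⟩ := ih' (s.1, s.2.1, s.2.2.1 + 1, s.2.2.2 + s.2.1)
      dsimp only at i1 i2 i3 i4
      have hcv : cv ((0,0,1,0) :: t) = cv t := by simp [cv, List.countP_cons]
      have hcx : cx ((0,0,1,0) :: t) = cx t := by simp [cx, List.countP_cons]
      have hcy : cy ((0,0,1,0) :: t) = cy t + 1 := by simp [cy, List.countP_cons]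
      rw [hcv, hcx, hcy]
      refine ⟨i1, i2, by omega, ?_⟩
      have expand : (cy t + 1) * (s.2.1.natAbs + cx t)
          = cy t * (s.2.1.natAbs + cx t) + (s.2.1.natAbs + cx t) := by ring
      omega
    · have key : gmul s (0,0,-1,0) = (s.1, s.2.1, s.2.2.1 - 1, s.2.2.2 - s.2.1) := by
        simp [gmul]; constructor <;> ring
      rw [key]
      obtain ⟨i1, i2, i3, i4⟩ := ih' (s.1, s.2.1, s.2.2.1 - 1, s.2.2.2 - s.2.1)
      dsimp only at i1 i2 i3 i4
      have hcv : cv ((0,0,-1,0) :: t) = cv t := by simp [cv, List.countP_cons]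
      have hcx : cx ((0,0,-1,0) :: t) = cx t := by simp [cx, List.countP_cons]
      have hcy : cy ((0,0,-1,0) :: t) = cy t + 1 := by simp [cy, List.countP_cons]
      rw [hcv, hcx, hcy]
      refine ⟨i1, i2, by omega, ?_⟩
      have expand : (cy t + 1) * (s.2.1.natAbs + cx t)
          = cy t * (s.2.1.natAbs + cx t) + (s.2.1.natAbs + cx t) := by ring
      omega

lemma s2_ev_bounds (l : List Γ4) (h : ∀ a ∈ l, a ∈ S2) :
    (ev l).1.natAbs ≤ cv l ∧ (ev l).2.1.natAbs ≤ cx l ∧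
    (ev l).2.2.1.natAbs ≤ cy l ∧ (ev l).2.2.2.natAbs ≤ cy l * cx l := by
  obtain ⟨i1, i2, i3, i4⟩ := s2_bounds l h gone
  simp only [gone, ev] at *
  norm_num at i1 i2 i3 i4
  exact ⟨i1, i2, i3, i4⟩

lemma wl1_gamma_le (n : ℕ) : wordLen S1 ((n : ℤ), 0, 0, (n : ℤ)) ≤ n := by
  have hev : ev (List.replicate n ((1 : ℤ),(0:ℤ),(0:ℤ),(1:ℤ))) = ((n:ℤ), 0, 0, (n:ℤ)) := by
    rw [ev_replicate_y0]; norm_num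
  have := wordLen_le S1 ((n:ℤ),0,0,(n:ℤ)) _
    (fun a ha => by rw [List.eq_of_mem_replicate ha]; simp [S1]) hev
  simpa using this

lemma natSqrt_le_real (k : ℕ) : (Nat.sqrt k : ℝ) ≤ Real.sqrt k :=
  Real.nat_sqrt_le_real_sqrt

lemma wl2_gamma_ge (n : ℕ) :
    (n : ℝ) + Real.sqrt n ≤ (wordLen S2 ((n : ℤ), 0, 0, (n : ℤ)) : ℝ) := by
  obtain ⟨l, hS, hev, hlen⟩ := wordLen_witness S2 _ (s2_word ((n:ℤ),0,0,(n:ℤ)))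
  obtain ⟨b1, b2, b3, b4⟩ := s2_ev_bounds l hS
  rw [hev] at b1 b2 b3 b4
  dsimp only at b1 b2 b3 b4
  rw [Int.natAbs_natCast] at b1 b4
  have hL : l.length = cv l + cx l + cy l := s2_len l hS
  have hsq : Real.sqrt n ≤ (cx l : ℝ) + cy l := by
    have h1 : n ≤ (cx l + cy l) * (cx l + cy l) := by nlinarith [b4]
    have : Real.sqrt n ≤ Real.sqrt (((cx l + cy l) * (cx l + cy l) : ℕ) : ℝ) :=
      Real.sqrt_le_sqrt (by exact_mod_cast h1)
    calc Real.sqrt n ≤ Real.sqrt (((cx l + cy l) * (cx l + cy l) : ℕ) : ℝ) := this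
    _ = ((cx l + cy l : ℕ) : ℝ) := by
        push_cast
        rw [show ((cx l : ℝ) + cy l) * ((cx l : ℝ) + cy l) = ((cx l : ℝ) + cy l)^2 by ring]
        exact Real.sqrt_sq (by positivity)
    _ = (cx l : ℝ) + cy l := by push_cast; ring
  have hcast : (l.length : ℝ) = (cv l : ℝ) + cx l + cy l := by exact_mod_cast hL
  have hcv : (n : ℝ) ≤ (cv l : ℝ) := by exact_mod_cast b1
  rw [← hlen]
  linarith

lemma ball_finite (R : ℕ) : {γ : Γ4 | wordLen S2 γ ≤ R}.Finite := by
  apply Set.Finite.subset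
    (Set.Finite.prod (Set.finite_Icc (-(R:ℤ)) R)
      (Set.Finite.prod (Set.finite_Icc (-(R:ℤ)) R)
        (Set.Finite.prod (Set.finite_Icc (-(R:ℤ)) R)
          (Set.finite_Icc (-((R:ℤ)*R)) ((R:ℤ)*R)))))
  intro γ hγ
  simp only [Set.mem_setOf_eq] at hγ
  obtain ⟨l, hS, hev, hlen⟩ := wordLen_witness S2 γ (s2_word γ)
  obtain ⟨b1, b2, b3, b4⟩ := s2_ev_bounds l hS
  rw [hev] at b1 b2 b3 b4
  have hL : l.length = cv l + cx l + cy l := s2_len l hS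
  have hR : cv l + cx l + cy l ≤ R := by omega
  have hxy : cy l * cx l ≤ R * R := Nat.mul_le_mul (by omega) (by omega)
  refine ⟨?_, ?_, ?_, ?_⟩ <;> simp only [Set.mem_Icc] <;> constructor <;> omega

lemma gap (n : ℕ) : Real.sqrt n ≤
    |(wordLen S1 ((n:ℤ), 0, 0, (n:ℤ)) : ℝ) - (wordLen S2 ((n:ℤ), 0, 0, (n:ℤ)) : ℝ)| := by
  have h1 := wl1_gamma_le n
  have h2 := wl2_gamma_ge n
  have ha : (wordLen S1 ((n:ℤ), 0, 0, (n:ℤ)) : ℝ) ≤ n := by exact_mod_cast h1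
  have hs : 0 ≤ Real.sqrt n := Real.sqrt_nonneg _
  rw [abs_sub_comm, abs_of_nonneg (by linarith)]
  linarith

lemma dist_bound (γ : Γ4) (hb : 1 ≤ wordLen S2 γ) :
    |(wordLen S1 γ : ℝ) - (wordLen S2 γ : ℝ)| ≤ 28 * Real.sqrt (wordLen S2 γ) := by
  set a := wordLen S1 γ with hadef
  set b := wordLen S2 γ with hbdef
  have n1 := wl_compare_12 γ
  have n2 := wl_compare_21 γ
  have sqb := natSqrt_le_real b
  have sqa := natSqrt_le_real a
  have hb1 : (1:ℝ) ≤ b := by exact_mod_cast hb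
  have hb0 : (0:ℝ) ≤ b := by linarith
  have hsb1 : (1:ℝ) ≤ Real.sqrt b := Real.one_le_sqrt.mpr hb1
  have hsbb : Real.sqrt b ≤ b := by
    nlinarith [Real.sq_sqrt hb0, Real.sqrt_nonneg (b:ℝ)]
  have hra : (a:ℝ) ≤ (b:ℝ) + 6 * Real.sqrt b + 4 := by
    have : (a:ℝ) ≤ (b:ℝ) + 6 * (Nat.sqrt b : ℝ) + 4 := by exact_mod_cast n1
    linarith
  have ha16 : (a:ℝ) ≤ 16 * b := by linarith
  have hsa : Real.sqrt a ≤ 4 * Real.sqrt b := by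
    calc Real.sqrt a ≤ Real.sqrt (16 * b) := Real.sqrt_le_sqrt ha16
    _ = Real.sqrt 16 * Real.sqrt b := Real.sqrt_mul (by norm_num) _
    _ = 4 * Real.sqrt b := by
        rw [show (16:ℝ) = 4^2 by norm_num, Real.sqrt_sq (by norm_num)]
  have hrb : (b:ℝ) ≤ (a:ℝ) + 6 * Real.sqrt a + 4 := by
    have : (b:ℝ) ≤ (a:ℝ) + 6 * (Nat.sqrt a : ℝ) + 4 := by exact_mod_cast n2
    linarith
  rw [abs_le]
  constructor <;> nlinarith

lemma tendsto_ratio :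
    Filter.Tendsto (fun γ : Γ4 => (wordLen S1 γ : ℝ) / (wordLen S2 γ : ℝ))
      Filter.cofinite (nhds 1) := by
  rw [Metric.tendsto_nhds]
  intro ε hε
  rw [Filter.eventually_cofinite]
  apply Set.Finite.subset (ball_finite (⌈(28/ε)^2⌉₊ + 1))
  intro γ hγ
  simp only [Set.mem_setOf_eq] at hγ ⊢
  by_contra hcon
  push_neg at hcon
  apply hγ
  set a := wordLen S1 γ with hadef
  set b := wordLen S2 γ with hbdef
  have hb : ⌈(28/ε)^2⌉₊ + 1 < b := hcon
  have hb1 : 1 ≤ b := by omega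
  have hbR : ((28/ε)^2 : ℝ) < b := by
    have h1 : ((28/ε)^2 : ℝ) ≤ (⌈(28/ε)^2⌉₊ : ℝ) := Nat.le_ceil _
    have h2 : ((⌈(28/ε)^2⌉₊ : ℕ) : ℝ) + 2 ≤ (b : ℝ) := by exact_mod_cast hb
    linarith
  have hb0 : (0:ℝ) < b := by
    have : (1:ℝ) ≤ b := by exact_mod_cast hb1
    linarith
  have hsb0 : 0 < Real.sqrt b := Real.sqrt_pos.mpr hb0
  have hsb : 28 / ε < Real.sqrt b := by
    rw [← Real.sqrt_sq (le_of_lt (div_pos (by norm_num) hε))]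
    exact Real.sqrt_lt_sqrt (by positivity) hbR
  have h28 : 28 / Real.sqrt b < ε := by
    rw [div_lt_iff₀ hsb0]
    rw [div_lt_iff₀ hε] at hsb
    linarith [mul_comm ε (Real.sqrt b)]
  have habs := dist_bound γ hb1
  rw [Real.dist_eq]
  have hrw : (a:ℝ)/b - 1 = ((a:ℝ) - b)/b := by field_simp
  rw [hrw, abs_div, abs_of_pos hb0]
  have hmulself : (b:ℝ) = Real.sqrt b * Real.sqrt b := (Real.mul_self_sqrt hb0.le).symm
  calc |(a:ℝ) - b| / b ≤ (28 * Real.sqrt b) / b :=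
        div_le_div_of_nonneg_right habs hb0.le
  _ = 28 / Real.sqrt b := by
        field_simp
        rw [Real.sq_sqrt hb0.le]
  _ < ε := h28

/-- There exist two finite symmetric generating sets `S₁, S₂` of
`Γ = H₃(ℤ) × ℤ` whose word metrics `ρ₁, ρ₂` are asymptotic
(`ρ₁(id,γ)/ρ₂(id,γ) → 1` as `γ → ∞`) but not at bounded distance; in fact
`|ρ₁(id,γ_n) − ρ₂(id,γ_n)| ≥ c√n` along `γ_n = (n;0,0,n)`. This disproves the
Burago–Margulis conjecture. -/
theorem burago_margulis_counterexample :
    ∃ T₁ T₂ : Set Γ4,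
      T₁.Finite ∧ T₂.Finite ∧
      (∀ a ∈ T₁, ginv a ∈ T₁) ∧ (∀ a ∈ T₂, ginv a ∈ T₂) ∧
      (∀ γ : Γ4, ∃ l : List Γ4, (∀ a ∈ l, a ∈ T₁) ∧ l.foldl gmul gone = γ) ∧
      (∀ γ : Γ4, ∃ l : List Γ4, (∀ a ∈ l, a ∈ T₂) ∧ l.foldl gmul gone = γ) ∧
      Tendsto (fun γ : Γ4 => (wordLen T₁ γ : ℝ) / (wordLen T₂ γ : ℝ))
        Filter.cofinite (nhds 1) ∧
      (∀ C : ℝ, ∃ γ : Γ4, C < |(wordLen T₁ γ : ℝ) - (wordLen T₂ γ : ℝ)|) ∧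
      ∃ c : ℝ, 0 < c ∧ ∃ N : ℕ, ∀ n : ℕ, N ≤ n →
        c * Real.sqrt n ≤
          |(wordLen T₁ ((n : ℤ), 0, 0, (n : ℤ)) : ℝ) -
            (wordLen T₂ ((n : ℤ), 0, 0, (n : ℤ)) : ℝ)| := by
  refine ⟨S1, S2, ?_, ?_, ?_, ?_, ?_, ?_, tendsto_ratio, ?_, 1, one_pos, 0, ?_⟩
  · exact Set.Finite.insert _ (Set.Finite.insert _ (Set.Finite.insert _ (Set.Finite.insert _
      (Set.Finite.insert _ (Set.Finite.insert _ (Set.Finite.insert _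
        (Set.finite_singleton _)))))))
  · exact Set.Finite.insert _ (Set.Finite.insert _ (Set.Finite.insert _ (Set.Finite.insert _
      (Set.Finite.insert _ (Set.finite_singleton _)))))
  · intro a ha
    simp only [S1, Set.mem_insert_iff, Set.mem_singleton_iff] at ha ⊢
    rcases ha with rfl|rfl|rfl|rfl|rfl|rfl|rfl|rfl <;> norm_num [ginv]
  · intro a ha
    simp only [S2, Set.mem_insert_iff, Set.mem_singleton_iff] at ha ⊢
    rcases ha with rfl|rfl|rfl|rfl|rfl|rfl <;> norm_num [ginv]
  · intro γ
    obtain ⟨l, h1, h2⟩ := s1_word γ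
    exact ⟨l, h1, h2⟩
  · intro γ
    obtain ⟨l, h1, h2⟩ := s2_word γ
    exact ⟨l, h1, h2⟩
  · intro C
    set k : ℕ := ⌈max C 0⌉₊ + 1 with hk
    refine ⟨(((k^2 : ℕ) : ℤ), 0, 0, ((k^2 : ℕ) : ℤ)), ?_⟩
    have hgap := gap (k^2)
    have hsq : Real.sqrt (((k^2 : ℕ) : ℝ)) = (k : ℝ) := by
      push_cast
      exact Real.sqrt_sq (by positivity)
    have hC : C < (k : ℝ) := by
      have h1 : C ≤ max C 0 := le_max_left _ _
      have h2 : max C 0 ≤ (⌈max C 0⌉₊ : ℝ) := Nat.le_ceil _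
      have h3 : ((⌈max C 0⌉₊ : ℕ) : ℝ) + 1 = (k : ℝ) := by rw [hk]; push_cast; ring
      linarith
    calc C < (k : ℝ) := hC
    _ = Real.sqrt (((k^2 : ℕ) : ℝ)) := hsq.symm
    _ ≤ _ := hgap
  · intro n _
    rw [one_mul]
    exact gap n
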